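/- Let $a > -1$, $A, T > 0$, and suppose $(f_n)_{n\ge 1}$ satisfies $|f_n| \le AT^n$ for all $n$. Define $\phi_n$ recursively by $\phi_0 = 0$, $\phi_n = f_n - (n-1+a)\phi_{n-1}$. Then $\frac{(-1)^n \phi_n}{\Gamma(n+a)}$ converges as $n \to \infty$ to $S_\infty := \sum_{j=1}^{\infty} \frac{(-1)^j f_j}{\Gamma(j+a)}$. -/

import Mathlib

theorem stmt_2 (a A T : ℝ) (ha : a > -1) (hA : A > 0) (hT : T > 0)
    (f : ℕ → ℂ) (hf : ∀ n : ℕ, 1 ≤ n → ‖f n‖ ≤ A * T ^ n)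
    (φ : ℕ → ℂ) (hφ0 : φ 0 = 0)
    (hφ : ∀ n : ℕ, 1 ≤ n → φ n = f n - ((n : ℂ) - 1 + a) * φ (n - 1)) :
    Filter.Tendsto (fun n : ℕ => (-1) ^ n * φ n / (Real.Gamma (n + a) : ℂ))
      Filter.atTop
      (nhds (∑' j : ℕ, (-1) ^ (j + 1) * f (j + 1) / (Real.Gamma ((j + 1 : ℕ) + a) : ℂ))) := by
  set g : ℕ → ℂ := fun j => (-1) ^ (j + 1) * f (j + 1) / (Real.Gamma ((j + 1 : ℕ) + a) : ℂ)
    with hg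
  -- partial sums equal the sequence
  have hkey : ∀ n : ℕ, ∑ i ∈ Finset.range n, g i
      = (-1) ^ n * φ n / (Real.Gamma (n + a) : ℂ) := by
    intro n
    induction n with
    | zero => simp [hφ0]
    | succ n ih =>
      rw [Finset.sum_range_succ, ih]
      have hrec := hφ (n + 1) (by omega)
      simp only [Nat.add_sub_cancel] at hrec
      rcases Nat.eq_zero_or_pos n with h0 | hpos
      · subst h0
        simp only [hrec, hφ0, hg]
        push_cast
        ring
      · have hna : (0 : ℝ) < (n : ℝ) + a := by
          have : (1 : ℝ) ≤ (n : ℝ) := by exact_mod_cast hpos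
          linarith
        have hG : Real.Gamma (((n + 1 : ℕ) : ℝ) + a) = ((n : ℝ) + a) * Real.Gamma ((n : ℝ) + a) := by
          have h1 : ((n + 1 : ℕ) : ℝ) + a = ((n : ℝ) + a) + 1 := by push_cast; ring
          rw [h1, Real.Gamma_add_one (ne_of_gt hna)]
        have hGpos : 0 < Real.Gamma ((n : ℝ) + a) := Real.Gamma_pos_of_pos hna
        have hcast : ((n + 1 : ℕ) : ℂ) - 1 + (a : ℂ) = (((n : ℝ) + a : ℝ) : ℂ) := by
          push_cast; ring
        simp only [hg]
        rw [hrec, hcast]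
        have hGc : ((Real.Gamma (((n + 1 : ℕ) : ℝ) + a) : ℝ) : ℂ)
            = (((((n : ℝ) + a : ℝ)) : ℂ)) * ((Real.Gamma ((n : ℝ) + a) : ℝ) : ℂ) := by
          rw [hG]; push_cast; ring
        rw [hGc]
        have h1 : ((Real.Gamma ((n : ℝ) + a) : ℂ)) ≠ 0 := by
          exact_mod_cast ne_of_gt hGpos
        have h2 : (n : ℂ) + (a : ℂ) ≠ 0 := by
          have := ne_of_gt hna
          exact_mod_cast Complex.ofReal_ne_zero.2 this
        push_cast
        field_simp [h1, h2]
        ring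
  -- summability
  have hsum : Summable g := by
    have hb : Summable (fun j : ℕ => A * T ^ (j + 1) / Real.Gamma ((j : ℝ) + 1 + a)) := by
      apply summable_of_ratio_norm_eventually_le (r := 1/2) (by norm_num)
      filter_upwards [Filter.eventually_ge_atTop (⌈2 * T + |a|⌉₊)] with n hn
      have hnR : (2 * T + |a| : ℝ) ≤ (n : ℝ) := by
        calc (2 * T + |a| : ℝ) ≤ (⌈2 * T + |a|⌉₊ : ℝ) := Nat.le_ceil _
        _ ≤ (n : ℝ) := by exact_mod_cast hn
      have hc : (0 : ℝ) < (n : ℝ) + 1 + a := by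
        have := abs_nonneg a; have := neg_abs_le a
        nlinarith
      have h2T : 2 * T ≤ (n : ℝ) + 1 + a := by
        have := neg_abs_le a
        nlinarith
      have hGpos : 0 < Real.Gamma ((n : ℝ) + 1 + a) := Real.Gamma_pos_of_pos hc
      have hG2 : Real.Gamma ((n + 1 : ℕ) + 1 + a)
          = ((n : ℝ) + 1 + a) * Real.Gamma ((n : ℝ) + 1 + a) := by
        have h1 : ((n + 1 : ℕ) : ℝ) + 1 + a = ((n : ℝ) + 1 + a) + 1 := by push_cast; ring
        rw [h1, Real.Gamma_add_one (ne_of_gt hc)]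
      have hbpos : 0 < A * T ^ (n + 1) / Real.Gamma ((n : ℝ) + 1 + a) := by positivity
      have hbpos2 : 0 < A * T ^ (n + 1 + 1) / Real.Gamma ((n + 1 : ℕ) + 1 + a) := by
        rw [hG2]; positivity
      rw [Real.norm_eq_abs, Real.norm_eq_abs, abs_of_pos hbpos2, abs_of_pos hbpos]
      have heq : A * T ^ (n + 1 + 1) / Real.Gamma (((n + 1 : ℕ) : ℝ) + 1 + a)
          = (T / ((n : ℝ) + 1 + a)) * (A * T ^ (n + 1) / Real.Gamma ((n : ℝ) + 1 + a)) := by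
        rw [hG2]; field_simp; ring
      rw [heq]
      have hfrac : T / ((n : ℝ) + 1 + a) ≤ 1 / 2 := by
        rw [div_le_div_iff₀ hc (by norm_num)]
        linarith
      calc (T / ((n : ℝ) + 1 + a)) * (A * T ^ (n + 1) / Real.Gamma ((n : ℝ) + 1 + a))
          ≤ (1 / 2) * (A * T ^ (n + 1) / Real.Gamma ((n : ℝ) + 1 + a)) := by
            exact mul_le_mul_of_nonneg_right hfrac (le_of_lt hbpos)
        _ = 1 / 2 * (A * T ^ (n + 1) / Real.Gamma ((n : ℝ) + 1 + a)) := by ring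
      
    apply Summable.of_norm_bounded hb
    intro j
    have hc : (0 : ℝ) < (j : ℝ) + 1 + a := by
      have : (0 : ℝ) ≤ (j : ℝ) := Nat.cast_nonneg j
      linarith
    have hGpos : 0 < Real.Gamma ((j : ℝ) + 1 + a) := Real.Gamma_pos_of_pos hc
    have hcast : ((j + 1 : ℕ) : ℝ) + a = (j : ℝ) + 1 + a := by push_cast; ring
    rw [hg]
    simp only [norm_div, norm_mul, norm_pow, norm_neg, norm_one, one_pow, one_mul]
    rw [hcast, Complex.norm_real, Real.norm_eq_abs, abs_of_pos hGpos]
    gcongr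
    exact hf (j + 1) (by omega)
  have htend := hsum.hasSum.tendsto_sum_nat
  rw [show (∑' j : ℕ, (-1) ^ (j + 1) * f (j + 1) / (Real.Gamma ((j + 1 : ℕ) + a) : ℂ)) = ∑' j, g j from rfl]
  exact htend.congr fun n => hkey n
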